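/- Let p be a prime and N = p + 1. The simple graph G_N admits an edge clique cover consisting of at most p² = (N−1)² cliques: there exists a family of p² sets of vertices of G_N, each a clique of G_N, such that the two endpoints of every edge of G_N lie together in some member of the family. -/

import Mathlib

section Mob

variable {F : Type*} [Field F] [DecidableEq F]

/-- A "Möbius involution" of the projective line `Option F`, indexed by `(a,b)`:
for `b + a² ≠ 0` it is `x ↦ (a x + b)/(x - a)` (with `∞ ↔ a`),
for `b + a² = 0` it is `x ↦ a - x` (fixing `∞`). -/
def mob (a b : F) : Option F → Option F :=
  if b + a ^ 2 = 0 then fun x => x.map (fun t => a - t)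
  else fun x =>
    match x with
    | none => some a
    | some t => if t = a then none else some ((a * t + b) / (t - a))

lemma mob_zero {a b : F} (h : b + a ^ 2 = 0) (x : Option F) :
    mob a b x = x.map (fun t => a - t) := by
  rw [mob, if_pos h]

lemma mob_inf {a b : F} (h : b + a ^ 2 ≠ 0) : mob a b none = some a := by
  rw [mob, if_neg h]

lemma mob_fix {a b : F} (h : b + a ^ 2 ≠ 0) : mob a b (some a) = none := by
  rw [mob, if_neg h]; simp

lemma mob_fin {a b t : F} (h : b + a ^ 2 ≠ 0) (ht : t ≠ a) :
    mob a b (some t) = some ((a * t + b) / (t - a)) := by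
  rw [mob, if_neg h]; simp [ht]

lemma mob_eq {a b t s : F} (h : b + a ^ 2 ≠ 0) (heq : t * s = a * (t + s) + b) :
    mob a b (some t) = some s := by
  have ht : t ≠ a := by
    rintro rfl
    exact h (by linear_combination -heq)
  rw [mob_fin h ht]
  congr 1
  have hta : t - a ≠ 0 := sub_ne_zero.mpr ht
  field_simp
  linear_combination -heq

lemma mob_mob (a b : F) (x : Option F) : mob a b (mob a b x) = x := by
  by_cases h : b + a ^ 2 = 0
  · rcases x with _ | t <;> simp [mob_zero h]
  · rcases x with _ | t
    · rw [mob_inf h, mob_fix h]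
    · by_cases ht : t = a
      · subst ht; rw [mob_fix h, mob_inf h]
      · have hta : t - a ≠ 0 := sub_ne_zero.mpr ht
        rw [mob_fin h ht]
        exact mob_eq h (by field_simp; ring)

/-- Blocks of a single `mob a b` are pairwise disjoint: if they meet they are equal. -/
lemma mob_block_eq {a b : F} {t u : Option F} (c : Option F)
    (hc : c ∈ s(t, mob a b t)) (hc' : c ∈ s(u, mob a b u)) :
    s(t, mob a b t) = s(u, mob a b u) := by
  rw [Sym2.mem_iff] at hc hc'
  obtain rfl | rfl := hc
  · obtain rfl | h := hc'
    · rfl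
    · rw [h, mob_mob, Sym2.eq_swap]
  · obtain rfl | h := hc'
    · rw [mob_mob, Sym2.eq_swap]
    · have : t = u := by
        have := congrArg (mob a b) h
        rwa [mob_mob, mob_mob] at this
      rw [this]

/-- Coverage, second pair finite. -/
lemma mob_cover' (x y : Option F) (u z : F)
    (hxu : x ≠ some u) (hxz : x ≠ some z) (hyu : y ≠ some u) (hyz : y ≠ some z) :
    ∃ a b : F, mob a b x = y ∧ mob a b (some u) = some z := by
  rcases x with _ | x₀ <;> rcases y with _ | y₀
  · -- ∞ ↦ ∞ : use x ↦ (u+z) - x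
    refine ⟨u + z, -(u + z) ^ 2, ?_, ?_⟩
    · rw [mob_zero (by ring)]; rfl
    · rw [mob_zero (by ring)]; simp
  · -- ∞ ↦ y₀
    have hy₀u : y₀ ≠ u := fun h => hyu (by rw [h])
    have hy₀z : y₀ ≠ z := fun h => hyz (by rw [h])
    have hb : (u * z - y₀ * (u + z)) + y₀ ^ 2 ≠ 0 := by
      intro h0
      have : (u - y₀) * (z - y₀) = 0 := by linear_combination h0
      rcases mul_eq_zero.mp this with h | h
      · exact hy₀u (by linear_combination -h)
      · exact hy₀z (by linear_combination -h)
    exact ⟨y₀, u * z - y₀ * (u + z), mob_inf hb, mob_eq hb (by ring)⟩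
  · -- x₀ ↦ ∞
    have hx₀u : x₀ ≠ u := fun h => hxu (by rw [h])
    have hx₀z : x₀ ≠ z := fun h => hxz (by rw [h])
    have hb : (u * z - x₀ * (u + z)) + x₀ ^ 2 ≠ 0 := by
      intro h0
      have : (u - x₀) * (z - x₀) = 0 := by linear_combination h0
      rcases mul_eq_zero.mp this with h | h
      · exact hx₀u (by linear_combination -h)
      · exact hx₀z (by linear_combination -h)
    exact ⟨x₀, u * z - x₀ * (u + z), mob_fix hb, mob_eq hb (by ring)⟩
  · -- x₀ ↦ y₀, all finite
    have hx₀u : x₀ ≠ u := fun h => hxu (by rw [h])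
    have hx₀z : x₀ ≠ z := fun h => hxz (by rw [h])
    have hy₀u : y₀ ≠ u := fun h => hyu (by rw [h])
    have hy₀z : y₀ ≠ z := fun h => hyz (by rw [h])
    by_cases hs : x₀ + y₀ = u + z
    · refine ⟨u + z, -(u + z) ^ 2, ?_, ?_⟩
      · rw [mob_zero (by ring)]; simp; linear_combination -hs
      · rw [mob_zero (by ring)]; simp
    · have hd : x₀ + y₀ - (u + z) ≠ 0 := sub_ne_zero.mpr hs
      set a : F := (x₀ * y₀ - u * z) / (x₀ + y₀ - (u + z)) with ha_def
      set b : F := x₀ * y₀ - a * (x₀ + y₀) with hb_def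
      have ha : a * (x₀ + y₀ - (u + z)) = x₀ * y₀ - u * z :=
        div_mul_cancel₀ _ hd
      have heq1 : x₀ * y₀ = a * (x₀ + y₀) + b := by rw [hb_def]; ring
      have heq2 : u * z = a * (u + z) + b := by rw [hb_def]; linear_combination ha
      have hb0 : b + a ^ 2 ≠ 0 := by
        intro h0
        have h1 : (x₀ - a) * (y₀ - a) = 0 := by linear_combination heq1 + h0
        have h2 : (u - a) * (z - a) = 0 := by linear_combination heq2 + h0
        rcases mul_eq_zero.mp h1 with h | h <;> rcases mul_eq_zero.mp h2 with h' | h'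
        · exact hx₀u (by linear_combination h - h')
        · exact hx₀z (by linear_combination h - h')
        · exact hy₀u (by linear_combination h - h')
        · exact hy₀z (by linear_combination h - h')
      exact ⟨a, b, mob_eq hb0 heq1, mob_eq hb0 heq2⟩

/-- Coverage: any two disjoint blocks lie in a common `mob`. -/
lemma mob_cover (x y u z : Option F)
    (hxu : x ≠ u) (hxz : x ≠ z) (hyu : y ≠ u) (hyz : y ≠ z) :
    ∃ a b : F, mob a b x = y ∧ mob a b u = z := by
  rcases u with _ | u₀
  · rcases x with _ | x₀
    · exact absurd rfl hxu
    rcases y with _ | y₀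
    · exact absurd rfl hyu
    obtain ⟨a, b, h1, h2⟩ := mob_cover' none z x₀ y₀
      (by simp) (by simp) (Ne.symm hxz) (Ne.symm hyz)
    exact ⟨a, b, h2, h1⟩
  · rcases z with _ | z₀
    · rcases x with _ | x₀
      · exact absurd rfl hxz
      rcases y with _ | y₀
      · exact absurd rfl hyz
      obtain ⟨a, b, h1, h2⟩ := mob_cover' (some u₀) none x₀ y₀
        (Ne.symm hxu) (Ne.symm hyu) (by simp) (by simp)
      exact ⟨a, b, h2, h1⟩
    · exact mob_cover' x y u₀ z₀ hxu hxz hyu hyz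

end Mob

/-- The graph `G_N` on unordered pairs (diagonal allowed) from `Fin N`, where two
distinct vertices are adjacent iff no element of `Fin N` belongs to both. -/
def GN (N : ℕ) : SimpleGraph (Sym2 (Fin N)) where
  Adj v w := v ≠ w ∧ ∀ x : Fin N, ¬(x ∈ v ∧ x ∈ w)
  symm := ⟨fun v w h => ⟨h.1.symm, fun x hx => h.2 x ⟨hx.2, hx.1⟩⟩⟩
  loopless := ⟨fun v h => h.1 rfl⟩

/-- For a prime `p` and `N = p + 1`, the graph `G_N` has an edge clique cover
consisting of `p² = (N−1)²` cliques. -/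
theorem edge_clique_cover_of_card_sq (p : ℕ) (hp : p.Prime) (N : ℕ) (hN : N = p + 1) :
    ∃ F : Fin (p ^ 2) → Set (Sym2 (Fin N)),
      (∀ i, (GN N).IsClique (F i)) ∧
      ∀ v w : Sym2 (Fin N), (GN N).Adj v w → ∃ i, v ∈ F i ∧ w ∈ F i := by
  subst hN
  haveI : Fact p.Prime := ⟨hp⟩
  haveI : NeZero p := ⟨hp.ne_zero⟩
  have e : Fin (p + 1) ≃ Option (ZMod p) :=
    Fintype.equivOfCardEq (by simp [ZMod.card])
  have idx : Fin (p ^ 2) ≃ ZMod p × ZMod p :=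
    Fintype.equivOfCardEq (by simp [ZMod.card, sq])
  refine ⟨fun i =>
      {v | ∃ t, Sym2.map e v = s(t, mob (idx i).1 (idx i).2 t)}, ?_, ?_⟩
  · intro i v hv w hw hvw
    obtain ⟨t, ht⟩ := hv
    obtain ⟨u, hu⟩ := hw
    refine ⟨hvw, ?_⟩
    intro q ⟨hqv, hqw⟩
    have hqv' : (e q : Option (ZMod p)) ∈ Sym2.map e v :=
      Sym2.mem_map.mpr ⟨q, hqv, rfl⟩
    have hqw' : (e q : Option (ZMod p)) ∈ Sym2.map e w :=
      Sym2.mem_map.mpr ⟨q, hqw, rfl⟩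
    rw [ht] at hqv'
    rw [hu] at hqw'
    have hblk := mob_block_eq (e q) hqv' hqw'
    apply hvw
    have : Sym2.map e v = Sym2.map e w := by rw [ht, hu, hblk]
    exact Sym2.map.injective e.injective this
  · intro v w hadj
    induction v using Sym2.inductionOn with
    | hf x y =>
      induction w using Sym2.inductionOn with
      | hf u z =>
        obtain ⟨hne, hdisj⟩ := hadj
        have hxm : x ∈ s(x, y) := Sym2.mem_mk_left x y
        have hym : y ∈ s(x, y) := Sym2.mem_mk_right x y
        have hum : u ∈ s(u, z) := Sym2.mem_mk_left u z
        have hzm : z ∈ s(u, z) := Sym2.mem_mk_right u z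
        have hxu : x ≠ u := fun h => hdisj x ⟨hxm, h ▸ hum⟩
        have hxz : x ≠ z := fun h => hdisj x ⟨hxm, h ▸ hzm⟩
        have hyu : y ≠ u := fun h => hdisj y ⟨hym, h ▸ hum⟩
        have hyz : y ≠ z := fun h => hdisj y ⟨hym, h ▸ hzm⟩
        obtain ⟨a, b, h1, h2⟩ := mob_cover (e x) (e y) (e u) (e z)
          (e.injective.ne hxu) (e.injective.ne hxz)
          (e.injective.ne hyu) (e.injective.ne hyz)
        refine ⟨idx.symm (a, b), ⟨e x, ?_⟩, ⟨e u, ?_⟩⟩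
        · rw [Sym2.map_pair_eq, Equiv.apply_symm_apply, h1]
        · rw [Sym2.map_pair_eq, Equiv.apply_symm_apply, h2]
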